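/- arXiv:2501.19310 — 7 statements merged into one kernel-verified Lean document; each statement's English description precedes it below -/
import Mathlib

section
/- For any n ≥ 2, the set {x ∈ ℝ^n : x_i ≥ 0 for all i, and ∏ᵢ x_i ≥ 1} is strictly convex: for any two distinct points x, y in the set and any t ∈ (0,1), the point t·x + (1−t)·y satisfies ∏ᵢ (t·x + (1−t)·y)_i > 1. -/
theorem stmt_0 (n : ℕ) (hn : 2 ≤ n) (x y : Fin n → ℝ)
    (hx : (∀ i, 0 ≤ x i) ∧ 1 ≤ ∏ i, x i)
    (hy : (∀ i, 0 ≤ y i) ∧ 1 ≤ ∏ i, y i)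
    (hxy : x ≠ y) (t : ℝ) (ht : t ∈ Set.Ioo (0:ℝ) 1) :
    1 < ∏ i, (t * x i + (1 - t) * y i) := by
  obtain ⟨hx0, hx1⟩ := hx
  obtain ⟨hy0, hy1⟩ := hy
  obtain ⟨ht0, ht1⟩ := ht
  have hxpos : ∀ i, 0 < x i := by
    intro i
    rcases (hx0 i).lt_or_eq with h | h
    · exact h
    · exfalso
      have : ∏ i, x i = 0 := Finset.prod_eq_zero (Finset.mem_univ i) h.symm
      linarith
  have hypos : ∀ i, 0 < y i := by
    intro i
    rcases (hy0 i).lt_or_eq with h | h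
    · exact h
    · exfalso
      have : ∏ i, y i = 0 := Finset.prod_eq_zero (Finset.mem_univ i) h.symm
      linarith
  have hzpos : ∀ i, 0 < t * x i + (1 - t) * y i := by
    intro i; nlinarith [hxpos i, hypos i]
  obtain ⟨j, hj⟩ := Function.ne_iff.mp hxy
  have key : ∀ i, t * Real.log (x i) + (1 - t) * Real.log (y i)
      ≤ Real.log (t * x i + (1 - t) * y i) := by
    intro i
    have := strictConcaveOn_log_Ioi.concaveOn.2 (Set.mem_Ioi.mpr (hxpos i))
      (Set.mem_Ioi.mpr (hypos i)) (le_of_lt ht0) (by linarith : (0:ℝ) ≤ 1 - t) (by ring)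
    simpa using this
  have keyj : t * Real.log (x j) + (1 - t) * Real.log (y j)
      < Real.log (t * x j + (1 - t) * y j) := by
    have := strictConcaveOn_log_Ioi.2 (Set.mem_Ioi.mpr (hxpos j))
      (Set.mem_Ioi.mpr (hypos j)) hj ht0 (by linarith : (0:ℝ) < 1 - t) (by ring)
    simpa using this
  have hsum : ∑ i, (t * Real.log (x i) + (1 - t) * Real.log (y i))
      < ∑ i, Real.log (t * x i + (1 - t) * y i) :=
    Finset.sum_lt_sum (fun i _ => key i) ⟨j, Finset.mem_univ j, keyj⟩
  have hlogx : 0 ≤ ∑ i, Real.log (x i) := by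
    rw [← Real.log_prod (fun i _ => (hxpos i).ne')]
    exact Real.log_nonneg hx1
  have hlogy : 0 ≤ ∑ i, Real.log (y i) := by
    rw [← Real.log_prod (fun i _ => (hypos i).ne')]
    exact Real.log_nonneg hy1
  have expand : ∑ i, (t * Real.log (x i) + (1 - t) * Real.log (y i))
      = t * ∑ i, Real.log (x i) + (1 - t) * ∑ i, Real.log (y i) := by
    rw [Finset.sum_add_distrib, Finset.mul_sum, Finset.mul_sum]
  have hpos : 0 < ∑ i, Real.log (t * x i + (1 - t) * y i) := by nlinarith
  rw [← Real.log_prod (fun i _ => (hzpos i).ne')] at hpos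
  have hP : 0 < ∏ i, (t * x i + (1 - t) * y i) := Finset.prod_pos (fun i _ => hzpos i)
  exact (Real.log_pos_iff hP.le).mp hpos
end

section
/- Let a ∈ ℝ^n with a_i ≥ 0 for all i. If p ∈ ℝ^n with p_i > 0 for all i, ∏ᵢ p_i = 1, and λ ∈ ℝ satisfy p_i + λ·p_i⁻¹ = a_i for all i (the stationarity conditions), then λ > 0 if and only if ∏ᵢ a_i > 1. -/
theorem stmt_1 (n : ℕ) (hn : 2 ≤ n) (a p : Fin n → ℝ) (lam : ℝ)
    (ha : ∀ i, 0 ≤ a i) (hp : ∀ i, 0 < p i) (hprod : ∏ i, p i = 1)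
    (hstat : ∀ i, p i + lam * (p i)⁻¹ = a i) :
    0 < lam ↔ 1 < ∏ i, a i := by
  constructor
  · intro hlam
    have h : ∏ i, p i < ∏ i, a i := by
      apply Finset.prod_lt_prod_of_nonempty
      · exact fun i _ => hp i
      · intro i _
        have : 0 < lam * (p i)⁻¹ := mul_pos hlam (inv_pos.mpr (hp i))
        linarith [hstat i]
      · exact Finset.univ_nonempty_iff.mpr (Fin.pos_iff_nonempty.mp (by omega))
    linarith
  · intro h
    by_contra hlam
    push_neg at hlam
    have h2 : ∏ i, a i ≤ ∏ i, p i := by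
      apply Finset.prod_le_prod
      · exact fun i _ => ha i
      · intro i _
        have : lam * (p i)⁻¹ ≤ 0 :=
          mul_nonpos_of_nonpos_of_nonneg hlam (le_of_lt (inv_pos.mpr (hp i)))
        linarith [hstat i]
    linarith
end

section
/- Let a ∈ ℝ^n with nonnegative components. If every global minimizer of p ↦ ‖p − a‖² over sl(n) = {p ∈ ℝ^n : ∏ᵢ p_i = 1} had a strictly negative component, a contradiction arises; hence there exists a global minimizer p with p_i > 0 for all i. -/
theorem stmt_2 (n : ℕ) (hn : 2 ≤ n) (a : Fin n → ℝ) (ha : ∀ i, 0 ≤ a i) :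
    ∃ p : Fin n → ℝ, (∏ i, p i) = 1 ∧ (∀ i, 0 < p i) ∧
      ∀ q : Fin n → ℝ, (∏ i, q i) = 1 →
        ∑ i, (p i - a i)^2 ≤ ∑ i, (q i - a i)^2 := by
  set f : (Fin n → ℝ) → ℝ := fun p => ∑ i, (p i - a i)^2 with hf
  have hfc : Continuous f := by
    apply continuous_finset_sum
    exact fun i _ => ((continuous_apply i).sub continuous_const).pow 2
  set c : ℝ := f (fun _ => 1) with hc
  have hc0 : 0 ≤ c := Finset.sum_nonneg fun i _ => sq_nonneg _
  set K : Set (Fin n → ℝ) := {p | (∏ i, p i) = 1 ∧ f p ≤ c} with hK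
  have hKne : K.Nonempty := ⟨fun _ => 1, Finset.prod_const_one, le_refl _⟩
  have hKclosed : IsClosed K := by
    apply IsClosed.inter
    · exact isClosed_eq (continuous_finset_prod _ fun i _ => continuous_apply i)
        continuous_const
    · exact isClosed_le hfc continuous_const
  have hKsub : K ⊆ Metric.closedBall a (Real.sqrt c) := by
    intro p hp
    rw [Metric.mem_closedBall, dist_pi_le_iff (Real.sqrt_nonneg c)]
    intro i
    rw [Real.dist_eq, ← Real.sqrt_sq_eq_abs]
    apply Real.sqrt_le_sqrt
    exact Finset.single_le_sum (f := fun j => (p j - a j)^2)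
      (fun j _ => sq_nonneg _) (Finset.mem_univ i) |>.trans hp.2
  have hKcomp : IsCompact K :=
    (isCompact_closedBall a (Real.sqrt c)).of_isClosed_subset hKclosed hKsub
  obtain ⟨p, hpK, hpmin⟩ := hKcomp.exists_isMinOn hKne hfc.continuousOn
  have hmin : ∀ q : Fin n → ℝ, (∏ i, q i) = 1 → f p ≤ f q := by
    intro q hq
    by_cases hfq : f q ≤ c
    · exact hpmin ⟨hq, hfq⟩
    · exact le_trans (hpmin ⟨Finset.prod_const_one, le_refl _⟩) (le_of_not_ge hfq)
  have hpne : ∀ i, p i ≠ 0 := by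
    intro i hi
    have := hpK.1
    rw [Finset.prod_eq_zero (Finset.mem_univ i) hi] at this
    exact zero_ne_one this
  refine ⟨fun i => |p i|, ?_, fun i => abs_pos.mpr (hpne i), ?_⟩
  · rw [← Finset.abs_prod, hpK.1, abs_one]
  · intro q hq
    have h1 : ∑ i, (|p i| - a i)^2 ≤ f p := by
      apply Finset.sum_le_sum
      intro i _
      have h2 : p i ≤ |p i| := le_abs_self _
      have h3 : (|p i|)^2 = (p i)^2 := sq_abs _
      nlinarith [ha i]
    exact h1.trans (hmin q hq)
end

section
/- Let a ∈ ℝ² with a_1 ≥ a_2 ≥ 0 and a_1·a_2 > 1. Then there is at most one point p with p_1 > p_2 > 0, p_1·p_2 = 1, that is a stationary point of the squared Euclidean distance to a, i.e., such that a = p + λ·p⁻¹ for some λ ∈ ℝ. -/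
theorem stmt_5 (a₁ a₂ : ℝ) (ha : a₁ ≥ a₂) (ha2 : a₂ ≥ 0) (hprod : 1 < a₁ * a₂)
    (p₁ p₂ q₁ q₂ : ℝ)
    (hp : p₁ > p₂ ∧ p₂ > 0 ∧ p₁ * p₂ = 1)
    (hq : q₁ > q₂ ∧ q₂ > 0 ∧ q₁ * q₂ = 1)
    (hpstat : ∃ l : ℝ, a₁ = p₁ + l * p₁⁻¹ ∧ a₂ = p₂ + l * p₂⁻¹)
    (hqstat : ∃ l : ℝ, a₁ = q₁ + l * q₁⁻¹ ∧ a₂ = q₂ + l * q₂⁻¹) :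
    p₁ = q₁ ∧ p₂ = q₂ := by
  obtain ⟨hp12, hp2, hpprod⟩ := hp
  obtain ⟨hq12, hq2, hqprod⟩ := hq
  obtain ⟨l, hl1, hl2⟩ := hpstat
  obtain ⟨m, hm1, hm2⟩ := hqstat
  have hp1 : p₁ > 0 := lt_trans hp2 hp12
  have hq1 : q₁ > 0 := lt_trans hq2 hq12
  have hx1 : p₁ > 1 := by nlinarith
  have hy1 : q₁ > 1 := by nlinarith
  have key : p₁ = q₁ := by
    by_contra hne
    have hE1 : a₁ * p₁ = p₁ ^ 2 + l := by
      rw [hl1]; field_simp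
    have hE2 : a₂ * p₁ = 1 + l * p₁ ^ 2 := by
      have hp2e : p₂ = p₁⁻¹ := by
        field_simp
        linarith [hpprod]
      rw [hl2, hp2e]; field_simp
    have hF1 : a₁ * q₁ = q₁ ^ 2 + m := by
      rw [hm1]; field_simp
    have hF2 : a₂ * q₁ = 1 + m * q₁ ^ 2 := by
      have hq2e : q₂ = q₁⁻¹ := by
        field_simp
        linarith [hqprod]
      rw [hm2, hq2e]; field_simp
    have hQx : a₁ * p₁ ^ 3 - a₂ * p₁ = p₁ ^ 4 - 1 := by
      linear_combination p₁ ^ 2 * hE1 - hE2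
    have hQy : a₁ * q₁ ^ 3 - a₂ * q₁ = q₁ ^ 4 - 1 := by
      linear_combination q₁ ^ 2 * hF1 - hF2
    have hG : a₁ * (p₁ ^ 2 + p₁ * q₁ + q₁ ^ 2) - a₂ =
        (p₁ + q₁) * (p₁ ^ 2 + q₁ ^ 2) := by
      have h := mul_left_cancel₀ (sub_ne_zero.mpr hne)
        (show (p₁ - q₁) * (a₁ * (p₁ ^ 2 + p₁ * q₁ + q₁ ^ 2) - a₂) =
            (p₁ - q₁) * ((p₁ + q₁) * (p₁ ^ 2 + q₁ ^ 2)) by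
          linear_combination hQx - hQy)
      exact h
    have hL : l * (q₁ * (p₁ + q₁)) = p₁ * q₁ ^ 3 + 1 := by
      linear_combination p₁ * hG - (p₁ ^ 2 + p₁ * q₁ + q₁ ^ 2) * hE1 + hE2
    have hlgt : l > 1 := by
      by_contra h
      push_neg at h
      nlinarith [hL,
        mul_nonneg (mul_nonneg hq1.le (by linarith : (0:ℝ) ≤ p₁ + q₁)) (by linarith : (0:ℝ) ≤ 1 - l),
        mul_pos (show (0:ℝ) < q₁ ^ 2 - 1 by nlinarith) (show (0:ℝ) < p₁ * q₁ - 1 by nlinarith)]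
    have hX : (a₁ - a₂) * p₁ = (p₁ ^ 2 - 1) * (1 - l) := by
      linear_combination hE1 - hE2
    have h1 : 0 ≤ (a₁ - a₂) * p₁ := mul_nonneg (sub_nonneg.mpr ha) hp1.le
    have h2 : (p₁ ^ 2 - 1) * (1 - l) < 0 :=
      mul_neg_of_pos_of_neg (by nlinarith) (by linarith)
    linarith [hX, h1, h2]
  refine ⟨key, ?_⟩
  have : p₁ * p₂ = p₁ * q₂ := by rw [hpprod, key, hqprod]
  exact mul_left_cancel₀ (ne_of_gt hp1) this
end

section
/- The squared-distance functional in logarithmic coordinates, d(ξ) = ½ Σ_{i=1}^n (exp(ξ_i) − a_i)², is coercive on the hyperplane V = {ξ ∈ ℝ^n : Σᵢ ξ_i = 0}: for any sequence (ξ^k) in V with ‖ξ^k‖_∞ → ∞ one has d(ξ^k) → ∞. -/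
open Filter Real

lemma key_exists (n : ℕ) (hn : 2 ≤ n) (ξ : Fin n → ℝ) (h : ∑ i, ξ i = 0) :
    ∃ j, ‖ξ‖ / (n - 1) ≤ ξ j := by
  have hne : Nonempty (Fin n) := ⟨⟨0, by omega⟩⟩
  have hc : (0:ℝ) < (n:ℝ) - 1 := by
    have : (2:ℝ) ≤ n := by exact_mod_cast hn
    linarith
  -- i maximizing |ξ i|
  obtain ⟨i, hi⟩ := Finite.exists_max (fun i => |ξ i|)
  have hnorm : ‖ξ‖ ≤ |ξ i| := by
    rw [pi_norm_le_iff_of_nonneg (abs_nonneg _)]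
    intro j; rw [Real.norm_eq_abs]; exact hi j
  -- j maximizing ξ
  obtain ⟨j, hj⟩ := Finite.exists_max ξ
  refine ⟨j, ?_⟩
  rcases le_or_gt 0 (ξ i) with hpos | hneg
  · have h1 : ‖ξ‖ ≤ ξ j := le_trans hnorm (by rw [abs_of_nonneg hpos]; exact hj i)
    have h2 : ‖ξ‖ / ((n:ℝ) - 1) ≤ ‖ξ‖ := by
      rw [div_le_iff₀ hc]
      have h2n : (2:ℝ) ≤ n := by exact_mod_cast hn
      nlinarith [norm_nonneg ξ, h2n]
    linarith
  · have habs : |ξ i| = -ξ i := abs_of_neg hneg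
    have hsum : ∑ x ∈ Finset.univ.erase i, ξ x = -ξ i := by
      have := Finset.sum_erase_add Finset.univ ξ (Finset.mem_univ i)
      linarith
    have hcard : (Finset.univ.erase i).card = n - 1 := by
      rw [Finset.card_erase_of_mem (Finset.mem_univ i), Finset.card_univ, Fintype.card_fin]
    have hle : ∑ x ∈ Finset.univ.erase i, ξ x ≤ (n - 1 : ℝ) * ξ j := by
      calc ∑ x ∈ Finset.univ.erase i, ξ x ≤ ∑ _x ∈ Finset.univ.erase i, ξ j :=
            Finset.sum_le_sum (fun x _ => hj x)
        _ = ((n - 1 : ℕ) : ℝ) * ξ j := by rw [Finset.sum_const, hcard, nsmul_eq_mul]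
        _ = (n - 1 : ℝ) * ξ j := by
            congr 1
            have : (1:ℕ) ≤ n := by omega
            push_cast [Nat.cast_sub this]
            ring
    rw [div_le_iff₀ hc]
    have : ‖ξ‖ ≤ -ξ i := by rw [← habs]; exact hnorm
    nlinarith

theorem stmt_11 (n : ℕ) (hn : 2 ≤ n) (a : Fin n → ℝ) :
    ∀ ξ : ℕ → Fin n → ℝ, (∀ k, ∑ i, ξ k i = 0) →
      Filter.Tendsto (fun k => ‖ξ k‖) Filter.atTop Filter.atTop →
      Filter.Tendsto (fun k => (1/2 : ℝ) * ∑ i, (Real.exp (ξ k i) - a i)^2)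
        Filter.atTop Filter.atTop := by
  intro ξ hsum hnorm
  have hc : (0:ℝ) < (n:ℝ) - 1 := by
    have : (2:ℝ) ≤ n := by exact_mod_cast hn
    linarith
  -- exp(‖ξ k‖/(n-1)) → ∞
  have h1 : Tendsto (fun k => Real.exp (‖ξ k‖ / ((n:ℝ) - 1))) atTop atTop :=
    Real.tendsto_exp_atTop.comp (hnorm.atTop_div_const hc)
  have h2 : Tendsto (fun k => (1/2 : ℝ) * (Real.exp (‖ξ k‖ / ((n:ℝ) - 1)) - ‖a‖)^2)
      atTop atTop := by
    have h3 : Tendsto (fun k => Real.exp (‖ξ k‖ / ((n:ℝ) - 1)) - ‖a‖) atTop atTop :=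
      h1.atTop_add tendsto_const_nhds
    have h4 : Tendsto (fun x : ℝ => x ^ 2) atTop atTop :=
      tendsto_pow_atTop (by norm_num)
    exact (h4.comp h3).const_mul_atTop (by norm_num)
  refine tendsto_atTop_mono' _ ?_ h2
  filter_upwards [h1.eventually_ge_atTop ‖a‖] with k hk
  obtain ⟨j, hj⟩ := key_exists n hn (ξ k) (hsum k)
  have haj : a j ≤ ‖a‖ := le_trans (le_abs_self _) (norm_le_pi_norm a j)
  have hmid : Real.exp (‖ξ k‖ / ((n:ℝ) - 1)) - ‖a‖ ≤ Real.exp (ξ k j) - a j := by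
    have := Real.exp_le_exp.mpr hj
    linarith
  have hsq : (Real.exp (‖ξ k‖ / ((n:ℝ) - 1)) - ‖a‖)^2 ≤ (Real.exp (ξ k j) - a j)^2 :=
    pow_le_pow_left₀ (by linarith) hmid 2
  have hterm : (Real.exp (ξ k j) - a j)^2 ≤ ∑ i, (Real.exp (ξ k i) - a i)^2 :=
    Finset.single_le_sum (f := fun i => (Real.exp (ξ k i) - a i)^2) (fun i _ => sq_nonneg _) (Finset.mem_univ j)
  have : (0:ℝ) < 1/2 := by norm_num
  nlinarith
end

section
/- Let Σ ∈ ℝ^{n×n} be invertible diagonal and λ ∈ ℝ with λ ≠ Σ_i² for all i and Σ_{i=1}^n 1/(Σ_i² − λ) ≠ 0. Define S(X) = X − λΣ⁻¹XᵀΣ⁻¹. Then for any X with tr(Σ⁻¹X) = 0 one has S(X) ≠ Σ⁻¹. -/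
open Matrix

theorem stmt_17 (n : ℕ) (σ : Fin n → ℝ) (hσ : ∀ i, σ i ≠ 0) (l : ℝ)
    (h2 : ∀ i, l ≠ (σ i)^2) (hsum : ∑ i, ((σ i)^2 - l)⁻¹ ≠ 0)
    (X : Matrix (Fin n) (Fin n) ℝ)
    (hX : ((Matrix.diagonal σ)⁻¹ * X).trace = 0) :
    X - l • ((Matrix.diagonal σ)⁻¹ * Xᵀ * (Matrix.diagonal σ)⁻¹)
      ≠ (Matrix.diagonal σ)⁻¹ := by
  have hinv : (Matrix.diagonal σ)⁻¹ = Matrix.diagonal (fun i => (σ i)⁻¹) := by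
    apply Matrix.inv_eq_right_inv
    rw [Matrix.diagonal_mul_diagonal]
    convert Matrix.diagonal_one
    exact mul_inv_cancel₀ (hσ _)
  intro h
  rw [hinv] at h hX
  have htr : ∑ i, (σ i)⁻¹ * X i i = 0 := by
    simpa [Matrix.trace, Matrix.diag, Matrix.mul_apply, Matrix.diagonal] using hX
  have hdiag : ∀ i, (σ i)⁻¹ * X i i = ((σ i)^2 - l)⁻¹ := by
    intro i
    have hi := congrFun (congrFun h i) i
    simp [Matrix.sub_apply, Matrix.smul_apply, Matrix.mul_apply, Matrix.diagonal,
      Matrix.transpose_apply, Finset.mul_sum] at hi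
    have hne : (σ i)^2 - l ≠ 0 := sub_ne_zero.mpr (fun hc => h2 i hc.symm)
    have hσi := hσ i
    field_simp at hi ⊢
    linear_combination hi
  rw [Finset.sum_congr rfl (fun i _ => hdiag i)] at htr
  exact hsum htr
end

section
/- Let a ∈ ℝ^n with a_i ≥ 0 for all i, and let p ∈ ℝ^n with p_i > 0 for all i and ∏ᵢ p_i = 1. Then the function t ↦ ∏_{i=1}^n (a_i + t·p_i⁻¹) is strictly monotone increasing on [t_min, ∞), where t_min = max_i(−a_i p_i), it equals 0 at t = t_min, and tends to +∞ as t → ∞; consequently there is a unique t* ≥ t_min with ∏ᵢ(a_i + t*·p_i⁻¹) = 1. Moreover t* ≤ 0 if ∏ᵢ a_i ≥ 1, and 0 ≤ t* ≤ 1 − (∏ᵢ a_i)^{1/n} if ∏ᵢ a_i ≤ 1. -/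
open Finset in
/-- Superadditivity of the geometric mean (Minkowski for diagonal matrices). -/
lemma gmean_superadd {n : ℕ} (hn : 0 < n) (x y : Fin n → ℝ)
    (hx : ∀ i, 0 ≤ x i) (hy : ∀ i, 0 ≤ y i) :
    (∏ i, x i) ^ ((1:ℝ)/n) + (∏ i, y i) ^ ((1:ℝ)/n) ≤ (∏ i, (x i + y i)) ^ ((1:ℝ)/n) := by
  by_cases hz : ∃ i, x i + y i = 0
  · obtain ⟨i, hi⟩ := hz
    have hxi : x i = 0 := le_antisymm (by linarith [hx i, hy i]) (hx i)
    have hyi : y i = 0 := by linarith [hx i, hy i]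
    rw [Finset.prod_eq_zero (Finset.mem_univ i) hxi,
      Finset.prod_eq_zero (Finset.mem_univ i) hyi,
      Real.zero_rpow (by positivity), add_zero]
    exact Real.rpow_nonneg (Finset.prod_nonneg fun j _ => by linarith [hx j, hy j]) _
  push_neg at hz
  have hpos : ∀ i, 0 < x i + y i := fun i =>
    lt_of_le_of_ne (by linarith [hx i, hy i]) (Ne.symm (hz i))
  have hnR : (0:ℝ) < n := by exact_mod_cast hn
  have hw : ∀ i ∈ Finset.univ (α := Fin n), (0:ℝ) ≤ (1:ℝ)/n := fun _ _ => by positivity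
  have hw' : ∑ _i : Fin n, (1:ℝ)/n = 1 := by
    rw [Finset.sum_const, Finset.card_univ, Fintype.card_fin, nsmul_eq_mul]
    field_simp
  have key : ∀ z : Fin n → ℝ, (∀ i, 0 ≤ z i) → (∀ i, z i ≤ x i + y i) →
      (∏ i, z i) ^ ((1:ℝ)/n) ≤ (∑ i, (1:ℝ)/n * (z i / (x i + y i))) *
        (∏ i, (x i + y i)) ^ ((1:ℝ)/n) := by
    intro z hz0 hzle
    have h1 : (∏ i, z i) ^ ((1:ℝ)/n)
        = (∏ i, (z i / (x i + y i))) ^ ((1:ℝ)/n) * (∏ i, (x i + y i)) ^ ((1:ℝ)/n) := by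
      rw [← Real.mul_rpow (Finset.prod_nonneg fun i _ => div_nonneg (hz0 i) (hpos i).le)
        (Finset.prod_nonneg fun i _ => (hpos i).le), ← Finset.prod_mul_distrib]
      congr 1
      refine Finset.prod_congr rfl fun i _ => ?_
      have := (hpos i).ne'
      field_simp
    rw [h1]
    gcongr
    · exact Real.rpow_nonneg (Finset.prod_nonneg fun i _ => (hpos i).le) _
    rw [← Real.finset_prod_rpow _ _ (fun i _ => div_nonneg (hz0 i) (hpos i).le) _]
    exact Real.geom_mean_le_arith_mean_weighted Finset.univ _ _ hw hw'
      (fun i _ => div_nonneg (hz0 i) (hpos i).le)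
  have hxk := key x hx (fun i => by linarith [hy i])
  have hyk := key y hy (fun i => by linarith [hx i])
  have hsum : (∑ i, (1:ℝ)/n * (x i / (x i + y i))) +
      (∑ i, (1:ℝ)/n * (y i / (x i + y i))) = 1 := by
    rw [← Finset.sum_add_distrib, ← hw']
    refine Finset.sum_congr rfl fun i _ => ?_
    have := (hpos i).ne'
    rw [← mul_add, ← add_div, div_self this, mul_one, hw']
  calc (∏ i, x i) ^ ((1:ℝ)/n) + (∏ i, y i) ^ ((1:ℝ)/n)
      ≤ ((∑ i, (1:ℝ)/n * (x i / (x i + y i))) + (∑ i, (1:ℝ)/n * (y i / (x i + y i)))) *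
        (∏ i, (x i + y i)) ^ ((1:ℝ)/n) := by rw [add_mul]; exact add_le_add hxk hyk
    _ = (∏ i, (x i + y i)) ^ ((1:ℝ)/n) := by rw [hsum, one_mul]

theorem stmt_18 (n : ℕ) (hn : 2 ≤ n) (a p : Fin n → ℝ)
    (ha : ∀ i, 0 ≤ a i) (hp : ∀ i, 0 < p i) (hprod : ∏ i, p i = 1)
    (tmin : ℝ) (htmin : IsGreatest {t : ℝ | ∃ i : Fin n, t = -(a i * p i)} tmin) :
    StrictMonoOn (fun t : ℝ => ∏ i, (a i + t * (p i)⁻¹)) (Set.Ici tmin) ∧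
    (∏ i, (a i + tmin * (p i)⁻¹)) = 0 ∧
    Filter.Tendsto (fun t : ℝ => ∏ i, (a i + t * (p i)⁻¹)) Filter.atTop Filter.atTop ∧
    (∃! t : ℝ, tmin ≤ t ∧ ∏ i, (a i + t * (p i)⁻¹) = 1) ∧
    (∀ t : ℝ, tmin ≤ t → ∏ i, (a i + t * (p i)⁻¹) = 1 →
      (1 ≤ ∏ i, a i → t ≤ 0) ∧
      ((∏ i, a i) ≤ 1 → 0 ≤ t ∧ t ≤ 1 - (∏ i, a i) ^ ((1 : ℝ)/n))) := by
  have hn0 : 0 < n := by omega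
  obtain ⟨⟨i₀, hi₀⟩, hub⟩ := htmin
  have hub' : ∀ i, -(a i * p i) ≤ tmin := fun i => hub ⟨i, rfl⟩
  have htmin_le : tmin ≤ 0 := hi₀ ▸ by nlinarith [ha i₀, hp i₀]
  -- nonnegativity of factors for t ≥ tmin
  have hfac : ∀ (t : ℝ), tmin ≤ t → ∀ i, 0 ≤ a i + t * (p i)⁻¹ := by
    intro t ht i
    have h1 : -(a i * p i) ≤ t := le_trans (hub' i) ht
    have hpi := hp i
    rw [← sub_nonneg]
    have : a i + t * (p i)⁻¹ - 0 = (a i * p i + t) * (p i)⁻¹ := by field_simp; ring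
    rw [this]
    have : 0 ≤ a i * p i + t := by linarith
    positivity
  have hfacpos : ∀ (t : ℝ), tmin < t → ∀ i, 0 < a i + t * (p i)⁻¹ := by
    intro t ht i
    have h1 : -(a i * p i) < t := lt_of_le_of_lt (hub' i) ht
    have hpi := hp i
    have h2 : 0 < a i * p i + t := by linarith
    have : a i + t * (p i)⁻¹ = (a i * p i + t) * (p i)⁻¹ := by field_simp
    rw [this]; positivity
  -- strict monotonicity
  have hmono : StrictMonoOn (fun t : ℝ => ∏ i, (a i + t * (p i)⁻¹)) (Set.Ici tmin) := by
    intro s hs t ht hst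
    have hposT : 0 < ∏ i, (a i + t * (p i)⁻¹) :=
      Finset.prod_pos fun i _ => hfacpos t (lt_of_le_of_lt hs hst) i
    rcases eq_or_lt_of_le (Set.mem_Ici.1 hs) with h | h
    · simp only
      rw [show ∏ i, (a i + s * (p i)⁻¹) = 0 from ?_]
      · exact hposT
      obtain ⟨i₁, hi₁⟩ : ∃ i, s = -(a i * p i) := h ▸ ⟨i₀, hi₀⟩
      refine Finset.prod_eq_zero (Finset.mem_univ i₁) ?_
      have := (hp i₁).ne'
      rw [hi₁]; field_simp; ring
    · refine Finset.prod_lt_prod_of_nonempty (fun i _ => hfacpos s h i) (fun i _ => ?_)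
        ⟨⟨0, hn0⟩, Finset.mem_univ _⟩
      have := inv_pos.2 (hp i)
      nlinarith
  refine ⟨hmono, ?_, ?_, ?_, ?_⟩
  -- value 0 at tmin
  · refine Finset.prod_eq_zero (Finset.mem_univ i₀) ?_
    have := (hp i₀).ne'
    rw [hi₀]; field_simp; ring
  -- tendsto atTop
  · have hge : ∀ t : ℝ, 1 ≤ t → t ≤ ∏ i, (a i + t * (p i)⁻¹) := by
      intro t ht
      have h1 : ∏ i, (t * (p i)⁻¹) ≤ ∏ i, (a i + t * (p i)⁻¹) := by
        refine Finset.prod_le_prod (fun i _ => mul_nonneg (by linarith) (inv_pos.2 (hp i)).le) (fun i _ => ?_)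
        linarith [ha i]
      have h2 : ∏ i, (t * (p i)⁻¹) = t ^ n := by
        rw [Finset.prod_mul_distrib, Finset.prod_const, Finset.prod_inv_distrib, hprod,
          Finset.card_univ, Fintype.card_fin, inv_one, mul_one]
      have h3 : t ≤ t ^ n := le_self_pow₀ ht (by omega)
      linarith
    refine Filter.tendsto_atTop_mono' _ ?_ Filter.tendsto_id
    filter_upwards [Filter.eventually_ge_atTop (1:ℝ)] with t ht
    exact hge t ht
  -- existence and uniqueness
  · have hcont : Continuous (fun t : ℝ => ∏ i, (a i + t * (p i)⁻¹)) := by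
      exact continuous_finset_prod _ fun i _ => by continuity
    have hT : Filter.Tendsto (fun t : ℝ => ∏ i, (a i + t * (p i)⁻¹))
        Filter.atTop Filter.atTop := by
      have hge : ∀ t : ℝ, 1 ≤ t → t ≤ ∏ i, (a i + t * (p i)⁻¹) := by
        intro t ht
        have h1 : ∏ i, (t * (p i)⁻¹) ≤ ∏ i, (a i + t * (p i)⁻¹) := by
          refine Finset.prod_le_prod (fun i _ => mul_nonneg (by linarith) (inv_pos.2 (hp i)).le) (fun i _ => ?_)
          linarith [ha i]
        have h2 : ∏ i, (t * (p i)⁻¹) = t ^ n := by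
          rw [Finset.prod_mul_distrib, Finset.prod_const, Finset.prod_inv_distrib, hprod,
            Finset.card_univ, Fintype.card_fin, inv_one, mul_one]
        have h3 : t ≤ t ^ n := le_self_pow₀ ht (by omega)
        linarith
      refine Filter.tendsto_atTop_mono' _ ?_ Filter.tendsto_id
      filter_upwards [Filter.eventually_ge_atTop (1:ℝ)] with t ht
      exact hge t ht
    obtain ⟨b, hb⟩ := (hT.eventually_ge_atTop 1).exists_forall_of_atTop
    set b' := max b (tmin + 1)
    have hb' : tmin ≤ b' := le_trans (by linarith) (le_max_right _ _)
    have hfb' : 1 ≤ ∏ i, (a i + b' * (p i)⁻¹) := hb b' (le_max_left _ _)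
    have hft : (fun t : ℝ => ∏ i, (a i + t * (p i)⁻¹)) tmin = 0 :=
      Finset.prod_eq_zero (Finset.mem_univ i₀) (by
        have := (hp i₀).ne'
        rw [hi₀]; field_simp; ring)
    have hIVT := intermediate_value_Icc hb' (hcont.continuousOn
      (s := Set.Icc tmin b'))
    have h1mem : (1:ℝ) ∈ Set.Icc ((fun t : ℝ => ∏ i, (a i + t * (p i)⁻¹)) tmin)
        ((fun t : ℝ => ∏ i, (a i + t * (p i)⁻¹)) b') := by
      rw [hft]; exact ⟨zero_le_one, hfb'⟩
    obtain ⟨t₀, ht₀mem, ht₀⟩ := hIVT h1mem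
    refine ⟨t₀, ⟨ht₀mem.1, ht₀⟩, ?_⟩
    intro s hs
    exact hmono.injOn hs.1 (Set.mem_Ici.2 ht₀mem.1) (hs.2.trans ht₀.symm)
  -- bounds
  · intro t ht hft
    have hf0 : (fun u : ℝ => ∏ i, (a i + u * (p i)⁻¹)) 0 = ∏ i, a i := by
      simp
    constructor
    · intro h1
      by_contra h
      push_neg at h
      have := hmono (Set.mem_Ici.2 htmin_le) (Set.mem_Ici.2 ht) h
      rw [hf0] at this
      simp only at this
      linarith
    · intro h1
      have ht0 : 0 ≤ t := by
        by_contra h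
        push_neg at h
        have := hmono (Set.mem_Ici.2 ht) (Set.mem_Ici.2 htmin_le) h
        rw [hf0] at this
        simp only at this
        linarith
      refine ⟨ht0, ?_⟩
      -- superadditivity bound
      have hkey := gmean_superadd hn0 a (fun i => t * (p i)⁻¹) ha (fun i => mul_nonneg ht0 (inv_pos.2 (hp i)).le)
      have h2 : ∏ i, (t * (p i)⁻¹) = t ^ n := by
        rw [Finset.prod_mul_distrib, Finset.prod_const, Finset.prod_inv_distrib, hprod,
          Finset.card_univ, Fintype.card_fin, inv_one, mul_one]
      have hnR : (0:ℝ) < n := by exact_mod_cast hn0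
      have h3 : (t ^ n : ℝ) ^ ((1:ℝ)/n) = t := by
        rw [← Real.rpow_natCast t n, ← Real.rpow_mul ht0]
        rw [show (n : ℝ) * ((1:ℝ)/n) = 1 by field_simp]
        exact Real.rpow_one t
      rw [h2, h3, hft, Real.one_rpow] at hkey
      linarith
end
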